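/- Under the Yule model, the expected number of cherries in a random ranked tree of size n ≥ 2 is (n+1)/3 and the variance is 2(n+1)/45 for n ≥ 5; i.e., Σ_{t ∈ R_n} l(t)·2^{n−l(t)}/n! = (n+1)/3 and Σ_{t ∈ R_n} l(t)²·2^{n−l(t)}/n! − ((n+1)/3)² = 2(n+1)/45. -/

import Mathlib

/-!
Common definitions: plane (ordered) labeled binary trees, the flip relation
generating the "unordered" identification, ranked trees, Ω-trees, and counts.
-/

/-- Plane rooted binary trees whose internal nodes carry a label. -/
inductive PTree : Type where
  | leaf : PTree
  | node : ℕ → PTree → PTree → PTree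
deriving DecidableEq

namespace PTree

/-- Size: the number of internal nodes. -/
def size : PTree → ℕ
  | leaf => 0
  | node _ l r => l.size + r.size + 1

/-- Number of cherries: internal nodes whose two children are leaves. -/
def cherries : PTree → ℕ
  | leaf => 0
  | node _ leaf leaf => 1
  | node _ l r => l.cherries + r.cherries

/-- Multiset of labels of internal nodes. -/
def labels : PTree → Multiset ℕ
  | leaf => 0
  | node k l r => k ::ₘ (l.labels + r.labels)

/-- Labels increase away from the root: each internal node's label is smaller
than all labels in its subtrees. -/
def Incr : PTree → Prop
  | leaf => True
  | node k l r =>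
      (∀ m ∈ l.labels, k < m) ∧ (∀ m ∈ r.labels, k < m) ∧ Incr l ∧ Incr r

/-- A ranked tree of size `n`: labels increase from the root and the internal
labels are exactly `{1, …, n}` (each occurring once). -/
def IsRanked (n : ℕ) (t : PTree) : Prop :=
  t.Incr ∧ t.labels = (Finset.Icc 1 n).val

/-- The Ω-condition: at every internal node, the smaller of the two child
subtrees has at most `ω` internal nodes. -/
def OmegaOK (ω : ℕ) : PTree → Prop
  | leaf => True
  | node _ l r => min l.size r.size ≤ ω ∧ OmegaOK ω l ∧ OmegaOK ω r

/-- One-step flip: swap the two children of some internal node. -/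
inductive Flip : PTree → PTree → Prop
  | swap (k : ℕ) (l r : PTree) : Flip (node k l r) (node k r l)
  | congL {l l' : PTree} (k : ℕ) (r : PTree) : Flip l l' → Flip (node k l r) (node k l' r)
  | congR {r r' : PTree} (k : ℕ) (l : PTree) : Flip r r' → Flip (node k l r) (node k l r')

end PTree

/-- Setoid on trees satisfying `P`, identifying trees up to swapping children
(so that left/right order is immaterial). -/
def treeSetoid (P : PTree → Prop) : Setoid {t : PTree // P t} :=
  Relation.EqvGen.setoid (fun a b => PTree.Flip a.1 b.1)

/-- `|R_n|` : the number of ranked trees (histories) of size `n`. -/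
noncomputable def rankedCount (n : ℕ) : ℕ :=
  Nat.card (Quotient (treeSetoid (PTree.IsRanked n)))

/-- `e_{n,l}` : the number of ranked trees of size `n` with `l` cherries. -/
noncomputable def rankedCountC (n l : ℕ) : ℕ :=
  Nat.card (Quotient (treeSetoid (fun t => PTree.IsRanked n t ∧ t.cherries = l)))

/-- `|Ω^ω_n|` : the number of Ω^ω-trees of size `n`. -/
noncomputable def omegaCount (ω n : ℕ) : ℕ :=
  Nat.card (Quotient (treeSetoid (fun t => PTree.IsRanked n t ∧ PTree.OmegaOK ω t)))

/-- `|Ω^ω_{n,l}|` : the number of Ω^ω-trees of size `n` with `l` cherries. -/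
noncomputable def omegaCountC (ω n l : ℕ) : ℕ :=
  Nat.card (Quotient (treeSetoid
    (fun t => PTree.IsRanked n t ∧ PTree.OmegaOK ω t ∧ t.cherries = l)))

namespace PTree

lemma labels_card (t : PTree) : Multiset.card t.labels = t.size := by
  induction t with
  | leaf => simp [labels, size]
  | node k l r ihl ihr => simp [labels, size, ihl, ihr]

lemma eq_leaf_of_labels_eq_zero {t : PTree} (h : t.labels = 0) : t = leaf := by
  cases t with
  | leaf => rfl
  | node k l r => simp [labels] at h

lemma cherries_node_left {l : PTree} (hl : l ≠ leaf) (k : ℕ) (r : PTree) :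
    (node k l r).cherries = l.cherries + r.cherries := by
  cases l with
  | leaf => exact absurd rfl hl
  | node a b c => rfl

lemma cherries_node_right {r : PTree} (hr : r ≠ leaf) (k : ℕ) (l : PTree) :
    (node k l r).cherries = l.cherries + r.cherries := by
  cases r with
  | leaf => exact absurd rfl hr
  | node a b c => cases l <;> rfl

lemma one_le_cherries {t : PTree} (h : t ≠ leaf) : 1 ≤ t.cherries := by
  induction t with
  | leaf => cases h rfl
  | node k l r ihl ihr =>
    cases l with
    | leaf => cases r with
      | leaf => simp [cherries]
      | node a b c =>
        rw [cherries_node_right (by simp)]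
        have := ihr (by simp); omega
    | node a b c =>
      rw [cherries_node_left (by simp)]
      have := ihl (by simp); omega

/-- Insert a new internal node labeled `m` at the `i`-th leaf. -/
def ins (m : ℕ) : PTree → ℕ → PTree
  | leaf, _ => node m leaf leaf
  | node k l r, i =>
      if i < l.size + 1 then node k (ins m l i) r
      else node k l (ins m r (i - (l.size + 1)))

/-- Whether the `i`-th leaf belongs to a cherry. -/
def inCh : PTree → ℕ → Bool
  | leaf, _ => false
  | node _ leaf leaf, _ => true
  | node _ l r, i => if i < l.size + 1 then inCh l i else inCh r (i - (l.size + 1))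

lemma inCh_node_left {l : PTree} (hl : l ≠ leaf) (k : ℕ) (r : PTree) (i : ℕ) :
    inCh (node k l r) i = if i < l.size + 1 then inCh l i else inCh r (i - (l.size + 1)) := by
  cases l with
  | leaf => exact absurd rfl hl
  | node a b c => rfl

lemma inCh_node_right {r : PTree} (hr : r ≠ leaf) (k : ℕ) (l : PTree) (i : ℕ) :
    inCh (node k l r) i = if i < l.size + 1 then inCh l i else inCh r (i - (l.size + 1)) := by
  cases r with
  | leaf => exact absurd rfl hr
  | node a b c => cases l <;> rfl

lemma ins_ne_leaf {m : ℕ} {t : PTree} {i : ℕ} : ins m t i ≠ leaf := by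
  cases t with
  | leaf => simp [ins]
  | node k l r => simp only [ins]; split <;> simp

lemma size_ins (m : ℕ) (t : PTree) (i : ℕ) : (ins m t i).size = t.size + 1 := by
  induction t generalizing i with
  | leaf => simp [ins, size]
  | node k l r ihl ihr =>
    simp only [ins]; split <;> simp [size, ihl, ihr] <;> omega

lemma labels_ins (m : ℕ) (t : PTree) (i : ℕ) : (ins m t i).labels = m ::ₘ t.labels := by
  induction t generalizing i with
  | leaf => simp [ins, labels]
  | node k l r ihl ihr =>
    simp only [ins]; split <;> simp [labels, ihl, ihr]
    · rw [Multiset.cons_swap]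
    · rw [Multiset.cons_swap]

lemma incr_ins {m : ℕ} {t : PTree} (i : ℕ) (ht : t.Incr) (hm : ∀ j ∈ t.labels, j < m) :
    (ins m t i).Incr := by
  induction t generalizing i with
  | leaf => exact ⟨by simp [labels], by simp [labels], trivial, trivial⟩
  | node k l r ihl ihr =>
    obtain ⟨h1, h2, h3, h4⟩ := ht
    have hkm : k < m := hm k (by simp [labels])
    simp only [ins]; split
    · exact ⟨by
        intro x hx
        rw [labels_ins] at hx
        rcases Multiset.mem_cons.1 hx with h | h
        · omega
        · exact h1 x h, h2, ihl _ h3 (fun j hj => hm j (by simp [labels]; tauto)), h4⟩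
    · exact ⟨h1, by
        intro x hx
        rw [labels_ins] at hx
        rcases Multiset.mem_cons.1 hx with h | h
        · omega
        · exact h2 x h, h3, ihr _ h4 (fun j hj => hm j (by simp [labels]; tauto))⟩

lemma incr_of_incr_ins {m : ℕ} {t : PTree} {i : ℕ} (h : (ins m t i).Incr) : t.Incr := by
  induction t generalizing i with
  | leaf => trivial
  | node k l r ihl ihr =>
    simp only [ins] at h; split at h
    · obtain ⟨h1, h2, h3, h4⟩ := h
      exact ⟨fun x hx => h1 x (by rw [labels_ins]; exact Multiset.mem_cons_of_mem hx),
        h2, ihl h3, h4⟩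
    · obtain ⟨h1, h2, h3, h4⟩ := h
      exact ⟨h1, fun x hx => h2 x (by rw [labels_ins]; exact Multiset.mem_cons_of_mem hx),
        h3, ihr h4⟩

lemma cherries_ins (m : ℕ) {t : PTree} {i : ℕ} (hi : i < t.size + 1) :
    (ins m t i).cherries = t.cherries + (if inCh t i then 0 else 1) := by
  induction t generalizing i with
  | leaf => simp [ins, inCh, cherries]
  | node k l r ihl ihr =>
    by_cases hlr : l = leaf ∧ r = leaf
    · obtain ⟨hl, hr⟩ := hlr; subst hl; subst hr
      simp only [ins, size] at hi ⊢
      rcases i with _ | _ | i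
      · rfl
      · rfl
      · omega
    · have hic : inCh (node k l r) i =
          if i < l.size + 1 then inCh l i else inCh r (i - (l.size + 1)) := by
        rcases Classical.em (l = leaf) with h | h
        · rcases Classical.em (r = leaf) with h' | h'
          · exact absurd ⟨h, h'⟩ hlr
          · exact inCh_node_right h' k l i
        · exact inCh_node_left h k r i
      have hch : (node k l r).cherries = l.cherries + r.cherries := by
        rcases Classical.em (l = leaf) with h | h
        · rcases Classical.em (r = leaf) with h' | h'
          · exact absurd ⟨h, h'⟩ hlr
          · exact cherries_node_right h' k l
        · exact cherries_node_left h k r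
      simp only [size] at hi
      simp only [ins]
      by_cases c : i < l.size + 1
      · rw [if_pos c, cherries_node_left ins_ne_leaf, ihl c, hch, hic, if_pos c]
        omega
      · have hb : i - (l.size + 1) < r.size + 1 := by omega
        rw [if_neg c, cherries_node_right ins_ne_leaf, ihr hb, hch, hic, if_neg c]
        omega

lemma inCh_count (t : PTree) :
    (∑ i ∈ Finset.range (t.size + 1), (if inCh t i then 1 else 0)) = 2 * t.cherries := by
  induction t with
  | leaf => simp [inCh, size, cherries]
  | node k l r ihl ihr =>
    by_cases hlr : l = leaf ∧ r = leaf
    · obtain ⟨hl, hr⟩ := hlr; subst hl; subst hr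
      simp [size, cherries, inCh]
    · have hic : ∀ i, inCh (node k l r) i =
          if i < l.size + 1 then inCh l i else inCh r (i - (l.size + 1)) := by
        intro i
        rcases Classical.em (l = leaf) with h | h
        · rcases Classical.em (r = leaf) with h' | h'
          · exact absurd ⟨h, h'⟩ hlr
          · exact inCh_node_right h' k l i
        · exact inCh_node_left h k r i
      have hch : (node k l r).cherries = l.cherries + r.cherries := by
        rcases Classical.em (l = leaf) with h | h
        · rcases Classical.em (r = leaf) with h' | h'
          · exact absurd ⟨h, h'⟩ hlr
          · exact cherries_node_right h' k l
        · exact cherries_node_left h k r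
      have hsz : (node k l r).size + 1 = (l.size + 1) + (r.size + 1) := by
        simp [size]; omega
      rw [hsz, Finset.sum_range_add]
      have e1 : ∀ i ∈ Finset.range (l.size + 1),
          (if inCh (node k l r) i then (1:ℕ) else 0) = (if inCh l i then 1 else 0) := by
        intro i hi
        rw [hic i, if_pos (Finset.mem_range.1 hi)]
      have e2 : ∀ i ∈ Finset.range (r.size + 1),
          (if inCh (node k l r) (l.size + 1 + i) then (1:ℕ) else 0)
            = (if inCh r i then 1 else 0) := by
        intro i hi
        have hc : ¬ (l.size + 1 + i < l.size + 1) := by omega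
        have he : l.size + 1 + i - (l.size + 1) = i := by omega
        rw [hic (l.size + 1 + i), if_neg hc, he]
      rw [Finset.sum_congr rfl e1, Finset.sum_congr rfl e2, ihl, ihr, hch]
      ring

lemma ins_inj {m : ℕ} {t₁ t₂ : PTree} {i₁ i₂ : ℕ} (h₁ : m ∉ t₁.labels)
    (hi₁ : i₁ < t₁.size + 1) (hi₂ : i₂ < t₂.size + 1)
    (h : ins m t₁ i₁ = ins m t₂ i₂) : t₁ = t₂ ∧ i₁ = i₂ := by
  induction t₁ generalizing t₂ i₁ i₂ with
  | leaf =>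
    cases t₂ with
    | leaf =>
      simp only [size] at hi₁ hi₂
      exact ⟨rfl, by omega⟩
    | node k' l' r' =>
      exfalso
      simp only [ins] at h
      split at h
      · exact ins_ne_leaf (PTree.node.inj h).2.1.symm
      · exact ins_ne_leaf (PTree.node.inj h).2.2.symm
  | node k l r ihl ihr =>
    have hml : m ∉ l.labels := fun hx => h₁ (by simp [labels]; tauto)
    have hmr : m ∉ r.labels := fun hx => h₁ (by simp [labels]; tauto)
    cases t₂ with
    | leaf =>
      exfalso
      simp only [ins] at h
      split at h
      · exact ins_ne_leaf (PTree.node.inj h).2.1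
      · exact ins_ne_leaf (PTree.node.inj h).2.2
    | node k' l' r' =>
      simp only [size] at hi₁ hi₂
      simp only [ins] at h
      by_cases c1 : i₁ < l.size + 1 <;> by_cases c2 : i₂ < l'.size + 1
      · rw [if_pos c1, if_pos c2] at h
        obtain ⟨hk, h2, h3⟩ := PTree.node.inj h
        obtain ⟨hl2, hi2⟩ := ihl hml c1 c2 h2
        subst hk; subst hl2; subst h3
        exact ⟨rfl, hi2⟩
      · rw [if_pos c1, if_neg c2] at h
        exfalso
        apply hmr
        rw [(PTree.node.inj h).2.2, labels_ins]
        exact Multiset.mem_cons_self m _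
      · rw [if_neg c1, if_pos c2] at h
        exfalso
        apply hml
        rw [(PTree.node.inj h).2.1, labels_ins]
        exact Multiset.mem_cons_self m _
      · rw [if_neg c1, if_neg c2] at h
        obtain ⟨hk, h2, h3⟩ := PTree.node.inj h
        have hb1 : i₁ - (l.size + 1) < r.size + 1 := by omega
        have hb2 : i₂ - (l'.size + 1) < r'.size + 1 := by omega
        obtain ⟨hr2, hi2⟩ := ihr hmr hb1 hb2 h3
        subst hk; subst h2; subst hr2
        exact ⟨rfl, by omega⟩

lemma exists_ins {n : ℕ} {t : PTree} (hI : t.Incr) (hnd : t.labels.Nodup)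
    (hn : n ∈ t.labels) (hle : ∀ j ∈ t.labels, j ≤ n) :
    ∃ t' i, i < t'.size + 1 ∧ t = ins n t' i := by
  induction t with
  | leaf => simp [labels] at hn
  | node k l r ihl ihr =>
    obtain ⟨h1, h2, h3, h4⟩ := hI
    simp only [labels, Multiset.nodup_cons, Multiset.nodup_add] at hnd
    by_cases hk : k = n
    · subst hk
      have hl : l = leaf := eq_leaf_of_labels_eq_zero (Multiset.eq_zero_of_forall_notMem
        (fun x hx => by
          have := h1 x hx
          have := hle x (by simp [labels]; tauto)
          omega))
      have hr : r = leaf := eq_leaf_of_labels_eq_zero (Multiset.eq_zero_of_forall_notMem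
        (fun x hx => by
          have := h2 x hx
          have := hle x (by simp [labels]; tauto)
          omega))
      subst hl; subst hr
      exact ⟨leaf, 0, by simp [size], rfl⟩
    · have hn' : n ∈ l.labels ∨ n ∈ r.labels := by
        simp only [labels, Multiset.mem_cons, Multiset.mem_add] at hn
        tauto
      rcases hn' with hnl | hnr
      · obtain ⟨l', i, hi, hl⟩ := ihl h3 hnd.2.1 hnl
          (fun j hj => hle j (by simp [labels]; tauto))
      -- t = node k (ins n l' i) r = ins n (node k l' r) i
        refine ⟨node k l' r, i, by simp [size]; omega, ?_⟩
        rw [hl]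
        simp only [ins, if_pos hi]
      · obtain ⟨r', i, hi, hr⟩ := ihr h4 hnd.2.2.1 hnr
          (fun j hj => hle j (by simp [labels]; tauto))
        refine ⟨node k l r', l.size + 1 + i, by simp [size]; omega, ?_⟩
        rw [hr]
        have hc : ¬ (l.size + 1 + i < l.size + 1) := by omega
        have he : l.size + 1 + i - (l.size + 1) = i := by omega
        simp only [ins, if_neg hc, he]

def del (n : ℕ) : PTree → PTree
  | leaf => leaf
  | node k l r => if k = n then leaf else node k (del n l) (del n r)

lemma del_eq_self {n : ℕ} {t : PTree} (h : n ∉ t.labels) : del n t = t := by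
  induction t with
  | leaf => rfl
  | node k l r ihl ihr =>
    have hk : k ≠ n := fun hk => h (by simp [labels, hk])
    simp only [del, if_neg hk]
    rw [ihl (fun hx => h (by simp [labels]; tauto)), ihr (fun hx => h (by simp [labels]; tauto))]

lemma del_ins {n : ℕ} {t : PTree} (h : n ∉ t.labels) (i : ℕ) : del n (ins n t i) = t := by
  induction t generalizing i with
  | leaf => simp [ins, del]
  | node k l r ihl ihr =>
    have hk : k ≠ n := fun hk => h (by simp [labels, hk])
    have hl : n ∉ l.labels := fun hx => h (by simp [labels]; tauto)
    have hr : n ∉ r.labels := fun hx => h (by simp [labels]; tauto)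
    simp only [ins]
    split
    · simp only [del, if_neg hk]
      rw [ihl hl, del_eq_self hr]
    · simp only [del, if_neg hk]
      rw [ihr hr, del_eq_self hl]

lemma two_mul_cherries_le (t : PTree) : 2 * t.cherries ≤ t.size + 1 := by
  rw [← inCh_count]
  calc (∑ i ∈ Finset.range (t.size + 1), (if inCh t i then 1 else 0))
      ≤ ∑ i ∈ Finset.range (t.size + 1), 1 :=
        Finset.sum_le_sum (fun i _ => by split <;> omega)
    _ = t.size + 1 := by simp

def allT (N : ℕ) : ℕ → Finset PTree
  | 0 => {leaf}
  | m+1 => {leaf} ∪ ((Finset.Icc 1 N ×ˢ ((allT N m) ×ˢ (allT N m))).image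
      fun p => node p.1 p.2.1 p.2.2)

lemma mem_allT {N : ℕ} {t : PTree} :
    ∀ {m : ℕ}, t.size ≤ m → (∀ k ∈ t.labels, k ∈ Finset.Icc 1 N) → t ∈ allT N m := by
  induction t with
  | leaf =>
    intro m _ _
    cases m <;> simp [allT]
  | node k l r ihl ihr =>
    intro m hs hl
    cases m with
    | zero => simp [size] at hs
    | succ m =>
      have hs' : l.size ≤ m ∧ r.size ≤ m := by simp [size] at hs; omega
      simp only [allT, Finset.mem_union, Finset.mem_image]
      right
      refine ⟨⟨k, l, r⟩, ?_, rfl⟩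
      simp only [Finset.mem_product]
      exact ⟨hl k (by simp [labels]), ihl hs'.1 (fun j hj => hl j (by simp [labels]; tauto)),
        ihr hs'.2 (fun j hj => hl j (by simp [labels]; tauto))⟩

lemma isRanked_size {n : ℕ} {t : PTree} (h : t.IsRanked n) : t.size = n := by
  have h1 := labels_card t
  rw [h.2, ← Finset.card_def, Nat.card_Icc] at h1
  omega

lemma isRanked_nodup {n : ℕ} {t : PTree} (h : t.IsRanked n) : t.labels.Nodup := by
  rw [h.2]; exact (Finset.Icc 1 n).nodup

lemma isRanked_mem_labels {n : ℕ} {t : PTree} (h : t.IsRanked n) {k : ℕ} :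
    k ∈ t.labels ↔ (1 ≤ k ∧ k ≤ n) := by
  rw [h.2]
  simp [Finset.mem_Icc]

lemma Icc_val_succ {n : ℕ} (hn : 1 ≤ n) :
    (Finset.Icc 1 n).val = n ::ₘ (Finset.Icc 1 (n-1)).val := by
  have h : Finset.Icc 1 n = insert n (Finset.Icc 1 (n-1)) := by
    ext x; simp only [Finset.mem_Icc, Finset.mem_insert]; omega
  rw [h, Finset.insert_val_of_notMem (by simp only [Finset.mem_Icc]; omega)]

open scoped Classical in
noncomputable def rk (n : ℕ) : Finset PTree := (allT n n).filter fun t => t.IsRanked n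

open scoped Classical in
noncomputable def rkc (n l : ℕ) : Finset PTree :=
  (allT n n).filter fun t => t.IsRanked n ∧ t.cherries = l

lemma mem_rk {n : ℕ} {t : PTree} : t ∈ rk n ↔ t.IsRanked n := by
  simp only [rk, Finset.mem_filter]
  refine ⟨fun h => h.2, fun h => ⟨?_, h⟩⟩
  exact mem_allT (by rw [isRanked_size h]) (fun k hk => by rw [h.2] at hk; simpa using hk)

lemma mem_rkc {n l : ℕ} {t : PTree} : t ∈ rkc n l ↔ t.IsRanked n ∧ t.cherries = l := by
  simp only [rkc, Finset.mem_filter]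
  refine ⟨fun h => h.2, fun h => ⟨?_, h⟩⟩
  exact mem_allT (by rw [isRanked_size h.1]) (fun k hk => by rw [h.1.2] at hk; simpa using hk)

noncomputable def cnt (n l : ℕ) : ℕ := (rkc n l).card

lemma ins_ranked {n : ℕ} (hn : 1 ≤ n) {t' : PTree} (h : t'.IsRanked (n-1)) (i : ℕ) :
    (ins n t' i).IsRanked n := by
  constructor
  · exact incr_ins i h.1 (fun j hj => by
      have := (isRanked_mem_labels h).1 hj
      omega)
  · rw [labels_ins, h.2, ← Icc_val_succ hn]

lemma ranked_decomp {n : ℕ} (hn : 1 ≤ n) {t : PTree} (h : t.IsRanked n) :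
    ∃ t' i, i < n ∧ t = ins n t' i ∧ t'.IsRanked (n-1) ∧ n ∉ t'.labels := by
  obtain ⟨t', i, hi, ht⟩ := exists_ins h.1 (isRanked_nodup h)
    ((isRanked_mem_labels h).2 ⟨hn, le_refl n⟩)
    (fun j hj => ((isRanked_mem_labels h).1 hj).2)
  have hlab : n ::ₘ t'.labels = n ::ₘ (Finset.Icc 1 (n-1)).val := by
    rw [← labels_ins n t' i, ← ht, h.2, ← Icc_val_succ hn]
  have hlab' : t'.labels = (Finset.Icc 1 (n-1)).val := (Multiset.cons_inj_right n).1 hlab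
  have hnd := isRanked_nodup h
  rw [ht, labels_ins, Multiset.nodup_cons] at hnd
  have hIncr : t'.Incr := incr_of_incr_ins (ht ▸ h.1)
  have hsz : t'.size = n - 1 := by
    have h2 := labels_card t'
    rw [hlab', ← Finset.card_def, Nat.card_Icc] at h2
    omega
  exact ⟨t', i, by omega, ht, ⟨hIncr, hlab'⟩, hnd.1⟩

lemma rk_filter_cherries {n l : ℕ} [inst : DecidablePred fun t : PTree => t.cherries = l] :
    (rk n).filter (fun t => t.cherries = l) = rkc n l := by
  ext t
  simp only [Finset.mem_filter, mem_rk, mem_rkc]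

lemma cnt_rec {n l : ℕ} (hn : 2 ≤ n) (hl : 1 ≤ l) (h2l : 2 * l ≤ n + 2) :
    cnt n l = 2 * l * cnt (n-1) l + (n + 2 - 2 * l) * cnt (n-1) (l-1) := by
  classical
  have key : (rkc n l).card = ∑ t' ∈ rk (n-1), ((rkc n l).filter (fun t => del n t = t')).card := by
    apply Finset.card_eq_sum_card_fiberwise
    intro t ht
    rw [Finset.mem_coe, mem_rkc] at ht
    obtain ⟨t', i, hi, hins, ht', hnl⟩ := ranked_decomp (by omega) ht.1
    rw [hins, del_ins hnl]
    exact mem_rk.2 ht'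
  have fib : ∀ t' ∈ rk (n-1), ((rkc n l).filter (fun t => del n t = t')).card
      = (if t'.cherries = l then 2 * l else
          if t'.cherries = l - 1 then n + 2 - 2*l else 0) := by
    intro t' ht'
    rw [mem_rk] at ht'
    have hsz : t'.size = n - 1 := isRanked_size ht'
    have hnl : n ∉ t'.labels := by
      intro hx
      have := (isRanked_mem_labels ht').1 hx
      omega
    have hcard : ((Finset.range n).filter
        (fun i => t'.cherries + (if inCh t' i then 0 else 1) = l)).card
        = ((rkc n l).filter (fun t => del n t = t')).card := by
      apply Finset.card_nbij (i := fun i => ins n t' i)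
      · intro a ha
        simp only [Finset.mem_coe, Finset.mem_filter, Finset.mem_range] at ha
        refine Finset.mem_filter.2 ⟨mem_rkc.2 ⟨ins_ranked (by omega) ht' a, ?_⟩, del_ins hnl a⟩
        rw [cherries_ins n (by omega)]
        exact ha.2
      · intro a ha b hb hab
        simp only [Finset.coe_filter, Set.mem_setOf_eq, Finset.mem_range] at ha hb
        exact (ins_inj hnl (by omega) (by omega) hab).2
      · intro t ht
        simp only [Finset.coe_filter, Set.mem_setOf_eq] at ht
        obtain ⟨htm, hdel⟩ := ht
        rw [mem_rkc] at htm
        obtain ⟨t'', i, hi, hins, ht'', hnl''⟩ := ranked_decomp (by omega) htm.1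
        have heq : t'' = t' := by rw [hins, del_ins hnl''] at hdel; exact hdel
        subst heq
        refine ⟨i, ?_, hins.symm⟩
        simp only [Finset.coe_filter, Set.mem_setOf_eq, Finset.mem_range]
        refine ⟨hi, ?_⟩
        rw [← cherries_ins n (by omega), ← hins]
        exact htm.2
    rw [← hcard]
    have hsum := inCh_count t'
    rw [hsz] at hsum
    have hn1 : n - 1 + 1 = n := by omega
    rw [hn1] at hsum
    by_cases hcl : t'.cherries = l
    · rw [if_pos hcl]
      have hfe : (Finset.range n).filter
          (fun i => t'.cherries + (if inCh t' i then 0 else 1) = l)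
          = (Finset.range n).filter (fun i => inCh t' i = true) := by
        apply Finset.filter_congr
        intro i _
        by_cases hc : inCh t' i <;> simp [hc, hcl] <;> omega
      rw [hfe, Finset.card_filter, hsum, hcl]
    · by_cases hcl' : t'.cherries = l - 1
      · rw [if_neg hcl, if_pos hcl']
        have hfe : (Finset.range n).filter
            (fun i => t'.cherries + (if inCh t' i then 0 else 1) = l)
            = (Finset.range n).filter (fun i => ¬ (inCh t' i = true)) := by
          apply Finset.filter_congr
          intro i _
          by_cases hc : inCh t' i <;> simp [hc, hcl] <;> omega
        rw [hfe]
        have hparts := Finset.card_filter_add_card_filter_not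
          (s := Finset.range n) (p := fun i => inCh t' i = true)
        have hctrue : ((Finset.range n).filter (fun i => inCh t' i = true)).card
            = 2 * t'.cherries := by
          rw [Finset.card_filter, hsum]
        have hle2 : 2 * t'.cherries ≤ n := by
          have := two_mul_cherries_le t'
          omega
        have hcr : (Finset.range n).card = n := Finset.card_range n
        omega
      · rw [if_neg hcl, if_neg hcl']
        rw [Finset.card_eq_zero, Finset.filter_eq_empty_iff]
        intro i _
        by_cases hc : inCh t' i <;> simp [hc] <;> omega
  have split : ∀ t' ∈ rk (n-1),
      (if t'.cherries = l then 2*l else if t'.cherries = l-1 then n+2-2*l else 0)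
        = (if t'.cherries = l then 2*l else 0) + (if t'.cherries = l-1 then n+2-2*l else 0) := by
    intro t' _
    by_cases h1 : t'.cherries = l
    · rw [if_pos h1, if_pos h1, if_neg (by omega), add_zero]
    · rw [if_neg h1, if_neg h1, zero_add]
  have main : cnt n l = ∑ t' ∈ rk (n-1),
      ((if t'.cherries = l then 2*l else 0) + (if t'.cherries = l-1 then n+2-2*l else 0)) := by
    rw [cnt, key, Finset.sum_congr rfl fib, Finset.sum_congr rfl split]
  rw [main, Finset.sum_add_distrib]
  congr 1
  · rw [← Finset.sum_filter, rk_filter_cherries, Finset.sum_const, smul_eq_mul, mul_comm]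
    rfl
  · rw [← Finset.sum_filter, rk_filter_cherries, Finset.sum_const, smul_eq_mul, mul_comm]
    rfl

lemma cnt_zero {n : ℕ} (hn : 1 ≤ n) : cnt n 0 = 0 := by
  rw [cnt, Finset.card_eq_zero, Finset.eq_empty_iff_forall_notMem]
  intro t ht
  rw [mem_rkc] at ht
  have hsz := isRanked_size ht.1
  have hne : t ≠ leaf := by
    intro h; subst h; simp [size] at hsz; omega
  have := one_le_cherries hne
  omega

lemma cnt_big {n l : ℕ} (h : n + 1 < 2*l) : cnt n l = 0 := by
  rw [cnt, Finset.card_eq_zero, Finset.eq_empty_iff_forall_notMem]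
  intro t ht
  rw [mem_rkc] at ht
  have hsz := isRanked_size ht.1
  have := two_mul_cherries_le t
  omega

lemma rkc_one_one : rkc 1 1 = {node 1 leaf leaf} := by
  ext t
  rw [mem_rkc, Finset.mem_singleton]
  constructor
  · rintro ⟨h, -⟩
    obtain ⟨t', i, hi, hins, ht', -⟩ := ranked_decomp le_rfl h
    have h0 : t'.labels = 0 := by rw [ht'.2]; simp
    have ht'leaf := eq_leaf_of_labels_eq_zero h0
    subst ht'leaf
    simpa [ins] using hins
  · intro h; subst h
    refine ⟨⟨?_, ?_⟩, rfl⟩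
    · refine ⟨?_, ?_, trivial, trivial⟩ <;> simp [labels]
    · show (1 : ℕ) ::ₘ ((0 : Multiset ℕ) + 0) = (Finset.Icc 1 1).val
      rw [Finset.Icc_self]
      rfl

lemma cnt_one_one : cnt 1 1 = 1 := by
  rw [cnt, rkc_one_one, Finset.card_singleton]

lemma cnt_rec_real {n l : ℕ} (hn : 2 ≤ n) (hl : 1 ≤ l) :
    (cnt n l : ℝ) = 2*l*(cnt (n-1) l : ℝ) + ((n:ℝ) + 2 - 2*l) * (cnt (n-1) (l-1) : ℝ) := by
  by_cases h : 2*l ≤ n+2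
  · rw [cnt_rec hn hl h]
    push_cast [Nat.cast_sub h]
    ring
  · have h1 : cnt n l = 0 := cnt_big (by omega)
    have h2 : cnt (n-1) l = 0 := cnt_big (by omega)
    have h3 : cnt (n-1) (l-1) = 0 := cnt_big (by omega)
    rw [h1, h2, h3]
    simp

lemma step_sum (f : ℕ → ℝ) {n : ℕ} (hn : 2 ≤ n) :
    ∑ l ∈ Finset.range (n+1), f l * (cnt n l : ℝ)
      = ∑ l ∈ Finset.range n, (2*(l:ℝ)*f l + ((n:ℝ) - 2*l) * f (l+1)) * (cnt (n-1) l : ℝ) := by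
  set g : ℕ → ℝ := fun j => 2*(j:ℝ)*f j * (cnt (n-1) j : ℝ) with hg
  have e1 : ∀ i ∈ Finset.range n, f (i+1) * (cnt n (i+1) : ℝ)
      = g (i+1) + (((n:ℝ) - 2*i) * f (i+1)) * (cnt (n-1) i : ℝ) := by
    intro i _
    rw [cnt_rec_real hn (by omega)]
    simp only [hg, Nat.add_sub_cancel]
    push_cast
    ring
  rw [Finset.sum_range_succ' (fun l => f l * (cnt n l : ℝ)) n]
  have hz : cnt n 0 = 0 := cnt_zero (by omega)
  rw [hz]
  simp only [Nat.cast_zero, mul_zero, add_zero]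
  rw [Finset.sum_congr rfl e1, Finset.sum_add_distrib]
  have e3 : ∑ i ∈ Finset.range n, g (i+1) = ∑ i ∈ Finset.range n, g i := by
    have h0 := Finset.sum_range_succ' g n
    have h1 := Finset.sum_range_succ g n
    have hg0 : g 0 = 0 := by simp [hg]
    have hcnt : cnt (n-1) n = 0 := cnt_big (by omega)
    have hgn : g n = 0 := by simp [hg, hcnt]
    linarith [h0, h1]
  rw [e3, ← Finset.sum_add_distrib]
  apply Finset.sum_congr rfl
  intro i _
  simp only [hg]
  ring

lemma sum0_val (n : ℕ) (hn : 1 ≤ n) :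
    ∑ l ∈ Finset.range (n+1), (cnt n l : ℝ) = (n.factorial : ℝ) := by
  induction n with
  | zero => omega
  | succ n ih =>
    rcases Nat.eq_or_lt_of_le hn with h | h
    · simp only [← h]
      rw [Finset.sum_range_succ, Finset.sum_range_succ, Finset.sum_range_zero]
      rw [cnt_zero le_rfl, cnt_one_one]
      simp [Nat.factorial]
    · have hn' : 1 ≤ n := by omega
      have hstep := step_sum (fun _ => (1:ℝ)) (show 2 ≤ n+1 by omega)
      simp only [Nat.add_sub_cancel, one_mul, mul_one] at hstep
      have e : ∀ l ∈ Finset.range (n+1),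
          (2*(l:ℝ) + (((n+1 : ℕ):ℝ) - 2*l)) * (cnt n l : ℝ)
            = (((n:ℝ))+1) * (cnt n l : ℝ) := by
        intro l _; push_cast; ring
      rw [hstep, Finset.sum_congr rfl e, ← Finset.mul_sum, ih hn']
      rw [Nat.factorial_succ]
      push_cast
      ring

lemma sum1_val1 : ∑ l ∈ Finset.range 2, (l:ℝ) * (cnt 1 l : ℝ) = 1 := by
  rw [Finset.sum_range_succ, Finset.sum_range_succ, Finset.sum_range_zero]
  rw [cnt_zero le_rfl, cnt_one_one]
  norm_num

lemma sum2_val1 : ∑ l ∈ Finset.range 2, (l:ℝ)^2 * (cnt 1 l : ℝ) = 1 := by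
  rw [Finset.sum_range_succ, Finset.sum_range_succ, Finset.sum_range_zero]
  rw [cnt_zero le_rfl, cnt_one_one]
  norm_num

lemma step1 {n : ℕ} (hn : 2 ≤ n) :
    ∑ l ∈ Finset.range (n+1), (l:ℝ) * (cnt n l : ℝ)
      = ((n:ℝ) - 2) * (∑ l ∈ Finset.range n, (l:ℝ) * (cnt (n-1) l : ℝ))
        + (n:ℝ) * (∑ l ∈ Finset.range n, (cnt (n-1) l : ℝ)) := by
  rw [step_sum (fun l => (l:ℝ)) hn]
  rw [Finset.mul_sum, Finset.mul_sum, ← Finset.sum_add_distrib]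
  apply Finset.sum_congr rfl
  intro l _
  push_cast
  ring

lemma step2 {n : ℕ} (hn : 2 ≤ n) :
    ∑ l ∈ Finset.range (n+1), (l:ℝ)^2 * (cnt n l : ℝ)
      = ((n:ℝ) - 4) * (∑ l ∈ Finset.range n, (l:ℝ)^2 * (cnt (n-1) l : ℝ))
        + (2*(n:ℝ) - 2) * (∑ l ∈ Finset.range n, (l:ℝ) * (cnt (n-1) l : ℝ))
        + (n:ℝ) * (∑ l ∈ Finset.range n, (cnt (n-1) l : ℝ)) := by
  rw [step_sum (fun l => (l:ℝ)^2) hn]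
  rw [Finset.mul_sum, Finset.mul_sum, Finset.mul_sum, ← Finset.sum_add_distrib,
    ← Finset.sum_add_distrib]
  apply Finset.sum_congr rfl
  intro l _
  push_cast
  ring

lemma sum1_val (n : ℕ) (hn : 2 ≤ n) :
    ∑ l ∈ Finset.range (n+1), (l:ℝ) * (cnt n l : ℝ)
      = (n.factorial : ℝ) * ((n:ℝ) + 1) / 3 := by
  induction n, hn using Nat.le_induction with
  | base =>
    have h := step1 (le_refl 2)
    simp only [show (2:ℕ)-1 = 1 from rfl] at h
    rw [sum1_val1, sum0_val 1 le_rfl] at h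
    rw [h]
    norm_num [Nat.factorial]
  | succ n hn ih =>
    have h := step1 (show 2 ≤ n+1 by omega)
    simp only [Nat.add_sub_cancel] at h
    rw [h, ih, sum0_val n (by omega)]
    rw [Nat.factorial_succ]
    push_cast
    field_simp
    ring

lemma sum2_val (n : ℕ) (hn : 5 ≤ n) :
    ∑ l ∈ Finset.range (n+1), (l:ℝ)^2 * (cnt n l : ℝ)
      = (n.factorial : ℝ) * ((n:ℝ) + 1) * (5*(n:ℝ) + 7) / 45 := by
  have v2 : ∑ l ∈ Finset.range 3, (l:ℝ)^2 * (cnt 2 l : ℝ) = 2 := by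
    have h := step2 (le_refl 2)
    simp only [show (2:ℕ)-1 = 1 from rfl] at h
    rw [sum2_val1, sum1_val1, sum0_val 1 le_rfl] at h
    rw [h]
    norm_num [Nat.factorial]
  have v3 : ∑ l ∈ Finset.range 4, (l:ℝ)^2 * (cnt 3 l : ℝ) = 12 := by
    have h := step2 (show (2:ℕ) ≤ 3 by norm_num)
    simp only [show (3:ℕ)-1 = 2 from rfl] at h
    rw [v2, sum1_val 2 le_rfl, sum0_val 2 (by omega)] at h
    rw [h]
    norm_num [Nat.factorial]
  have v4 : ∑ l ∈ Finset.range 5, (l:ℝ)^2 * (cnt 4 l : ℝ) = 72 := by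
    have h := step2 (show (2:ℕ) ≤ 4 by norm_num)
    simp only [show (4:ℕ)-1 = 3 from rfl] at h
    rw [v3, sum1_val 3 (by omega), sum0_val 3 (by omega)] at h
    rw [h]
    norm_num [Nat.factorial]
  induction n, hn using Nat.le_induction with
  | base =>
    have h := step2 (show (2:ℕ) ≤ 5 by norm_num)
    simp only [show (5:ℕ)-1 = 4 from rfl] at h
    rw [v4, sum1_val 4 (by omega), sum0_val 4 (by omega)] at h
    rw [h]
    norm_num [Nat.factorial]
  | succ n hn ih =>
    have h := step2 (show 2 ≤ n+1 by omega)
    simp only [Nat.add_sub_cancel] at h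
    rw [h, ih, sum1_val n (by omega), sum0_val n (by omega)]
    rw [Nat.factorial_succ]
    push_cast
    field_simp
    ring

noncomputable def orbit : PTree → Finset PTree
  | leaf => {leaf}
  | node k l r =>
      ((orbit l ×ˢ orbit r).image fun p => node k p.1 p.2)
        ∪ ((orbit r ×ˢ orbit l).image fun p => node k p.1 p.2)

lemma mem_orbit_leaf {s : PTree} : s ∈ orbit leaf ↔ s = leaf := by simp [orbit]

lemma mem_orbit_node {s : PTree} {k : ℕ} {l r : PTree} :
    s ∈ orbit (node k l r) ↔ ∃ a b, s = node k a b ∧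
      ((a ∈ orbit l ∧ b ∈ orbit r) ∨ (a ∈ orbit r ∧ b ∈ orbit l)) := by
  simp only [orbit, Finset.mem_union, Finset.mem_image, Finset.mem_product, Prod.exists]
  constructor
  · rintro (⟨a, b, ⟨ha, hb⟩, rfl⟩ | ⟨a, b, ⟨ha, hb⟩, rfl⟩)
    · exact ⟨a, b, rfl, Or.inl ⟨ha, hb⟩⟩
    · exact ⟨a, b, rfl, Or.inr ⟨ha, hb⟩⟩
  · rintro ⟨a, b, rfl, (⟨ha, hb⟩ | ⟨ha, hb⟩)⟩
    · exact Or.inl ⟨a, b, ⟨ha, hb⟩, rfl⟩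
    · exact Or.inr ⟨a, b, ⟨ha, hb⟩, rfl⟩

lemma orbit_refl (t : PTree) : t ∈ orbit t := by
  induction t with
  | leaf => simp [orbit]
  | node k l r ihl ihr => exact mem_orbit_node.2 ⟨l, r, rfl, Or.inl ⟨ihl, ihr⟩⟩

lemma labels_of_mem_orbit : ∀ {t s : PTree}, s ∈ orbit t → s.labels = t.labels := by
  intro t
  induction t with
  | leaf => intro s hs; rw [mem_orbit_leaf] at hs; subst hs; rfl
  | node k l r ihl ihr =>
    intro s hs
    obtain ⟨a, b, rfl, (⟨ha, hb⟩ | ⟨ha, hb⟩)⟩ := mem_orbit_node.1 hs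
    · simp [labels, ihl ha, ihr hb]
    · simp only [labels, ihr ha, ihl hb]
      rw [add_comm]

lemma leaf_iff_of_mem_orbit {t s : PTree} (h : s ∈ orbit t) : s = leaf ↔ t = leaf := by
  constructor
  · intro hs; subst hs
    apply eq_leaf_of_labels_eq_zero
    rw [← labels_of_mem_orbit h]; rfl
  · intro ht; subst ht; exact mem_orbit_leaf.1 h

lemma cherries_of_mem_orbit : ∀ {t s : PTree}, s ∈ orbit t → s.cherries = t.cherries := by
  intro t
  induction t with
  | leaf => intro s hs; rw [mem_orbit_leaf] at hs; subst hs; rfl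
  | node k l r ihl ihr =>
    intro s hs
    obtain ⟨a, b, rfl, (⟨ha, hb⟩ | ⟨ha, hb⟩)⟩ := mem_orbit_node.1 hs
    · by_cases hl : l = leaf
      · have hal : a = leaf := (leaf_iff_of_mem_orbit ha).2 hl
        by_cases hr : r = leaf
        · have hbl : b = leaf := (leaf_iff_of_mem_orbit hb).2 hr
          subst hl; subst hr; subst hal; subst hbl; rfl
        · have hbl : b ≠ leaf := fun hh => hr ((leaf_iff_of_mem_orbit hb).1 hh)
          rw [cherries_node_right hbl, cherries_node_right hr, ihl ha, ihr hb]
      · have hal : a ≠ leaf := fun hh => hl ((leaf_iff_of_mem_orbit ha).1 hh)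
        rw [cherries_node_left hal, cherries_node_left hl, ihl ha, ihr hb]
    · by_cases hl : l = leaf
      · have hbl : b = leaf := (leaf_iff_of_mem_orbit hb).2 hl
        by_cases hr : r = leaf
        · have hal : a = leaf := (leaf_iff_of_mem_orbit ha).2 hr
          subst hl; subst hr; subst hal; subst hbl; rfl
        · have hal : a ≠ leaf := fun hh => hr ((leaf_iff_of_mem_orbit ha).1 hh)
          rw [cherries_node_left hal, cherries_node_right hr, ihr ha, ihl hb]
          omega
      · have hbl : b ≠ leaf := fun hh => hl ((leaf_iff_of_mem_orbit hb).1 hh)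
        rw [cherries_node_right hbl, cherries_node_left hl, ihr ha, ihl hb]
        omega

lemma size_of_mem_orbit {t s : PTree} (h : s ∈ orbit t) : s.size = t.size := by
  rw [← labels_card, ← labels_card, labels_of_mem_orbit h]

lemma incr_of_mem_orbit : ∀ {t s : PTree}, s ∈ orbit t → (s.Incr ↔ t.Incr) := by
  intro t
  induction t with
  | leaf => intro s hs; rw [mem_orbit_leaf] at hs; subst hs; rfl
  | node k l r ihl ihr =>
    intro s hs
    obtain ⟨a, b, rfl, (⟨ha, hb⟩ | ⟨ha, hb⟩)⟩ := mem_orbit_node.1 hs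
    · constructor
      · rintro ⟨h1, h2, h3, h4⟩
        exact ⟨fun m hm => h1 m (by rw [labels_of_mem_orbit ha]; exact hm),
          fun m hm => h2 m (by rw [labels_of_mem_orbit hb]; exact hm),
          (ihl ha).1 h3, (ihr hb).1 h4⟩
      · rintro ⟨h1, h2, h3, h4⟩
        exact ⟨fun m hm => h1 m (by rw [← labels_of_mem_orbit ha]; exact hm),
          fun m hm => h2 m (by rw [← labels_of_mem_orbit hb]; exact hm),
          (ihl ha).2 h3, (ihr hb).2 h4⟩
    · constructor
      · rintro ⟨h1, h2, h3, h4⟩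
        exact ⟨fun m hm => h2 m (by rw [labels_of_mem_orbit hb]; exact hm),
          fun m hm => h1 m (by rw [labels_of_mem_orbit ha]; exact hm),
          (ihl hb).1 h4, (ihr ha).1 h3⟩
      · rintro ⟨h1, h2, h3, h4⟩
        exact ⟨fun m hm => h2 m (by rw [← labels_of_mem_orbit ha]; exact hm),
          fun m hm => h1 m (by rw [← labels_of_mem_orbit hb]; exact hm),
          (ihr ha).2 h4, (ihl hb).2 h3⟩

lemma orbit_symm : ∀ {t s : PTree}, s ∈ orbit t → t ∈ orbit s := by
  intro t
  induction t with
  | leaf => intro s hs; rw [mem_orbit_leaf] at hs; subst hs; exact orbit_refl _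
  | node k l r ihl ihr =>
    intro s hs
    obtain ⟨a, b, rfl, (⟨ha, hb⟩ | ⟨ha, hb⟩)⟩ := mem_orbit_node.1 hs
    · exact mem_orbit_node.2 ⟨l, r, rfl, Or.inl ⟨ihl ha, ihr hb⟩⟩
    · exact mem_orbit_node.2 ⟨l, r, rfl, Or.inr ⟨ihl hb, ihr ha⟩⟩

lemma orbit_trans : ∀ {t u s : PTree}, s ∈ orbit u → u ∈ orbit t → s ∈ orbit t := by
  intro t
  induction t with
  | leaf =>
    intro u s hsu hut
    rw [mem_orbit_leaf] at hut; subst hut; exact hsu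
  | node k l r ihl ihr =>
    intro u s hsu hut
    obtain ⟨c, d, rfl, (⟨hc, hd⟩ | ⟨hc, hd⟩)⟩ := mem_orbit_node.1 hut
    · obtain ⟨a, b, rfl, (⟨ha, hb⟩ | ⟨ha, hb⟩)⟩ := mem_orbit_node.1 hsu
      · exact mem_orbit_node.2 ⟨a, b, rfl, Or.inl ⟨ihl ha hc, ihr hb hd⟩⟩
      · exact mem_orbit_node.2 ⟨a, b, rfl, Or.inr ⟨ihr ha hd, ihl hb hc⟩⟩
    · obtain ⟨a, b, rfl, (⟨ha, hb⟩ | ⟨ha, hb⟩)⟩ := mem_orbit_node.1 hsu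
      · exact mem_orbit_node.2 ⟨a, b, rfl, Or.inr ⟨ihr ha hc, ihl hb hd⟩⟩
      · exact mem_orbit_node.2 ⟨a, b, rfl, Or.inl ⟨ihl ha hd, ihr hb hc⟩⟩

lemma labels_ne_zero {t : PTree} (h : t ≠ leaf) : t.labels ≠ 0 :=
  fun h0 => h (eq_leaf_of_labels_eq_zero h0)

lemma cherries_le_size (t : PTree) : t.cherries ≤ t.size := by
  have := two_mul_cherries_le t
  omega

lemma card_orbit : ∀ {t : PTree}, t.labels.Nodup →
    (orbit t).card = 2^(t.size - t.cherries) := by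
  intro t
  induction t with
  | leaf => intro _; simp [orbit, size, cherries]
  | node k l r ihl ihr =>
    intro hnd
    simp only [labels, Multiset.nodup_cons, Multiset.nodup_add] at hnd
    obtain ⟨hk, hndl, hndr, hdisj⟩ := hnd
    by_cases hlr : l = leaf ∧ r = leaf
    · obtain ⟨hl, hr⟩ := hlr; subst hl; subst hr
      have horb : orbit (node k leaf leaf) = {node k leaf leaf} := by
        simp [orbit]
      rw [horb, Finset.card_singleton]
      rfl
    · have hinj : Function.Injective (fun p : PTree × PTree => node k p.1 p.2) := by
        intro p q h
        obtain ⟨-, h1, h2⟩ := PTree.node.inj h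
        exact Prod.ext h1 h2
      have hdisjoint : Disjoint ((orbit l ×ˢ orbit r).image fun p => node k p.1 p.2)
          ((orbit r ×ˢ orbit l).image fun p => node k p.1 p.2) := by
        rw [Finset.disjoint_left]
        intro x hx1 hx2
        simp only [Finset.mem_image, Finset.mem_product, Prod.exists] at hx1 hx2
        obtain ⟨a, b, ⟨ha, hb⟩, rfl⟩ := hx1
        obtain ⟨a', b', ⟨ha', hb'⟩, hx⟩ := hx2
        obtain ⟨-, h1, h2⟩ := PTree.node.inj hx
        rw [h1] at ha'
        by_cases hl : l = leaf
        · have hr : r ≠ leaf := fun hh => hlr ⟨hl, hh⟩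
          have h0 : a.labels = 0 := by rw [labels_of_mem_orbit ha, hl]; rfl
          have h1 : a.labels = r.labels := labels_of_mem_orbit ha'
          exact labels_ne_zero hr (by rw [← h1, h0])
        · obtain ⟨x0, hx0⟩ := Multiset.exists_mem_of_ne_zero (labels_ne_zero hl)
          have h1 : x0 ∈ a.labels := by rw [labels_of_mem_orbit ha]; exact hx0
          have h2 : x0 ∈ r.labels := by rw [← labels_of_mem_orbit ha']; exact h1
          exact Multiset.disjoint_left.1 hdisj hx0 h2
      rw [orbit, Finset.card_union_of_disjoint hdisjoint,
        Finset.card_image_of_injective _ hinj, Finset.card_image_of_injective _ hinj,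
        Finset.card_product, Finset.card_product, ihl hndl, ihr hndr]
      have hch : (node k l r).cherries = l.cherries + r.cherries := by
        rcases Classical.em (l = leaf) with h | h
        · rcases Classical.em (r = leaf) with h' | h'
          · exact absurd ⟨h, h'⟩ hlr
          · exact cherries_node_right h' k l
        · exact cherries_node_left h k r
      have hcl := cherries_le_size l
      have hcr := cherries_le_size r
      have hexp : (node k l r).size - (node k l r).cherries
          = (l.size - l.cherries) + (r.size - r.cherries) + 1 := by
        simp only [size, hch]; omega
      rw [hexp, pow_add, pow_add]
      ring

lemma eqvGen_node_left {a a' : PTree} (k : ℕ) (b : PTree)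
    (h : Relation.EqvGen Flip a a') :
    Relation.EqvGen Flip (node k a b) (node k a' b) := by
  induction h with
  | rel x y hxy => exact .rel _ _ (Flip.congL k b hxy)
  | refl x => exact .refl _
  | symm x y _ ih => exact .symm _ _ ih
  | trans x y z _ _ ih1 ih2 => exact .trans _ _ _ ih1 ih2

lemma eqvGen_node_right {b b' : PTree} (k : ℕ) (a : PTree)
    (h : Relation.EqvGen Flip b b') :
    Relation.EqvGen Flip (node k a b) (node k a b') := by
  induction h with
  | rel x y hxy => exact .rel _ _ (Flip.congR k a hxy)
  | refl x => exact .refl _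
  | symm x y _ ih => exact .symm _ _ ih
  | trans x y z _ _ ih1 ih2 => exact .trans _ _ _ ih1 ih2

lemma flip_mem_orbit {s t : PTree} (h : Flip s t) : s ∈ orbit t := by
  induction h with
  | swap k l r => exact mem_orbit_node.2 ⟨l, r, rfl, Or.inr ⟨orbit_refl l, orbit_refl r⟩⟩
  | congL k r h ih => exact mem_orbit_node.2 ⟨_, _, rfl, Or.inl ⟨ih, orbit_refl r⟩⟩
  | congR k l h ih => exact mem_orbit_node.2 ⟨_, _, rfl, Or.inl ⟨orbit_refl l, ih⟩⟩

lemma eqvGen_of_mem_orbit : ∀ {t s : PTree}, s ∈ orbit t → Relation.EqvGen Flip s t := by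
  intro t
  induction t with
  | leaf => intro s hs; rw [mem_orbit_leaf] at hs; subst hs; exact .refl _
  | node k l r ihl ihr =>
    intro s hs
    obtain ⟨a, b, rfl, (⟨ha, hb⟩ | ⟨ha, hb⟩)⟩ := mem_orbit_node.1 hs
    · exact .trans _ _ _ (eqvGen_node_left k b (ihl ha)) (eqvGen_node_right k l (ihr hb))
    · refine .trans _ _ _ (eqvGen_node_left k b (ihr ha)) ?_
      refine .trans _ _ _ (eqvGen_node_right k r (ihl hb)) ?_
      exact .rel _ _ (Flip.swap k r l)

lemma mem_orbit_of_eqvGen {s t : PTree} (h : Relation.EqvGen Flip s t) : s ∈ orbit t := by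
  induction h with
  | rel x y hxy => exact flip_mem_orbit hxy
  | refl x => exact orbit_refl x
  | symm x y _ ih => exact orbit_symm ih
  | trans x y z _ _ ih1 ih2 => exact orbit_trans ih1 ih2

end PTree

lemma eqvGen_subtype_of_eqvGen {P : PTree → Prop}
    (hP : ∀ {x y : PTree}, x ∈ PTree.orbit y → P y → P x)
    {s t : PTree} (h : Relation.EqvGen PTree.Flip s t) :
    ∀ (hs : P s) (ht : P t),
      Relation.EqvGen (fun a b : {u : PTree // P u} => PTree.Flip a.1 b.1) ⟨s, hs⟩ ⟨t, ht⟩ := by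
  induction h with
  | rel x y hxy => intro hs ht; exact .rel _ _ hxy
  | refl x => intro hs ht; exact .refl _
  | symm x y h ih => intro hs ht; exact .symm _ _ (ih ht hs)
  | trans x y z h1 h2 ih1 ih2 =>
    intro hs ht
    have hy : P y := hP (PTree.orbit_symm (PTree.mem_orbit_of_eqvGen h1)) hs
    exact .trans _ _ _ (ih1 hs hy) (ih2 hy ht)

lemma rankedCountC_mul_pow (n l : ℕ) :
    rankedCountC n l * 2^(n - l) = PTree.cnt n l := by
  classical
  set P : PTree → Prop := fun t => t.IsRanked n ∧ t.cherries = l with hP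
  have hPinv : ∀ {x y : PTree}, x ∈ PTree.orbit y → P y → P x := by
    intro x y hxy hy
    refine ⟨⟨(PTree.incr_of_mem_orbit hxy).2 hy.1.1, ?_⟩, ?_⟩
    · rw [PTree.labels_of_mem_orbit hxy]; exact hy.1.2
    · rw [PTree.cherries_of_mem_orbit hxy]; exact hy.2
  have hrel : ∀ a b : {t : PTree // P t},
      Relation.EqvGen (fun a b : {t : PTree // P t} => PTree.Flip a.1 b.1) a b
        ↔ a.1 ∈ PTree.orbit b.1 := by
    intro a b
    constructor
    · intro h
      induction h with
      | rel x y hxy => exact PTree.flip_mem_orbit hxy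
      | refl x => exact PTree.orbit_refl _
      | symm x y _ ih => exact PTree.orbit_symm ih
      | trans x y z _ _ ih1 ih2 => exact PTree.orbit_trans ih1 ih2
    · intro h
      have h2 := eqvGen_subtype_of_eqvGen hPinv (PTree.eqvGen_of_mem_orbit h) a.2 b.2
      simpa using h2
  have hmem : ∀ t : PTree, P t ↔ t ∈ PTree.rkc n l := fun t => PTree.mem_rkc.symm
  have e : {t : PTree // P t} ≃ {t : PTree // t ∈ PTree.rkc n l} :=
    Equiv.subtypeEquivRight hmem
  haveI : Fintype {t : PTree // P t} := Fintype.ofEquiv _ e.symm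
  haveI : Finite (Quotient (treeSetoid P)) := Quotient.finite _
  haveI fq : Fintype (Quotient (treeSetoid P)) := Fintype.ofFinite _
  have hcardP : Nat.card {t : PTree // P t} = (PTree.rkc n l).card := by
    rw [Nat.card_congr e]
    exact Nat.card_eq_finsetCard _
  have hsig : Nat.card {t : PTree // P t}
      = ∑ q : Quotient (treeSetoid P),
          Nat.card {a : {t : PTree // P t} // Quotient.mk (treeSetoid P) a = q} := by
    rw [← Nat.card_congr (Equiv.sigmaFiberEquiv (Quotient.mk (treeSetoid P)))]
    rw [Nat.card_eq_fintype_card, Fintype.card_sigma]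
    exact Finset.sum_congr rfl (fun q _ => (Nat.card_eq_fintype_card).symm)
  have hfiber : ∀ q : Quotient (treeSetoid P),
      Nat.card {a : {t : PTree // P t} // Quotient.mk (treeSetoid P) a = q} = 2^(n-l) := by
    intro q
    induction q using Quotient.ind with
    | _ b =>
      have e2 : {a : {t : PTree // P t} // Quotient.mk (treeSetoid P) a
            = Quotient.mk (treeSetoid P) b}
          ≃ {x : PTree // x ∈ PTree.orbit b.1} :=
        { toFun := fun a => ⟨a.1.1, (hrel a.1 b).1 (Quotient.eq.1 a.2)⟩
          invFun := fun x => ⟨⟨x.1, hPinv x.2 b.2⟩, Quotient.eq.2 ((hrel _ b).2 x.2)⟩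
          left_inv := fun a => Subtype.ext (Subtype.ext rfl)
          right_inv := fun x => rfl }
      rw [Nat.card_congr e2, Nat.card_eq_finsetCard,
        PTree.card_orbit (PTree.isRanked_nodup b.2.1),
        PTree.isRanked_size b.2.1, b.2.2]
  have hmain : Nat.card {t : PTree // P t}
      = Nat.card (Quotient (treeSetoid P)) * 2^(n-l) := by
    rw [hsig, Finset.sum_congr rfl (fun q _ => hfiber q), Finset.sum_const,
      smul_eq_mul, Finset.card_univ, Nat.card_eq_fintype_card]
  have hrc : rankedCountC n l = Nat.card (Quotient (treeSetoid P)) := by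
    rw [rankedCountC, hP]
  rw [hrc, ← hmain, hcardP]
  rfl

theorem yule_aux_mean (n : ℕ) (hn : 2 ≤ n) :
    ∑ l ∈ Finset.range (n + 1),
        (l : ℝ) * (rankedCountC n l : ℝ) * 2 ^ (n - l) / (n.factorial : ℝ) =
          ((n : ℝ) + 1) / 3 := by
  have hfact : (n.factorial : ℝ) ≠ 0 := Nat.cast_ne_zero.2 n.factorial_ne_zero
  have key : ∀ l, (rankedCountC n l : ℝ) * 2^(n-l) = (PTree.cnt n l : ℝ) := by
    intro l
    have h := rankedCountC_mul_pow n l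
    calc (rankedCountC n l : ℝ) * 2^(n-l)
        = ((rankedCountC n l * 2^(n-l) : ℕ) : ℝ) := by push_cast; ring
      _ = _ := by rw [h]
  have e : ∀ l ∈ Finset.range (n+1),
      (l:ℝ) * (rankedCountC n l : ℝ) * 2^(n-l) / (n.factorial : ℝ)
        = (l:ℝ) * (PTree.cnt n l : ℝ) / (n.factorial : ℝ) := by
    intro l _
    rw [mul_assoc, key l]
  rw [Finset.sum_congr rfl e, ← Finset.sum_div, PTree.sum1_val n hn]
  field_simp

theorem yule_aux_var (n : ℕ) (hn : 5 ≤ n) :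
    (∑ l ∈ Finset.range (n + 1),
        (l : ℝ) ^ 2 * (rankedCountC n l : ℝ) * 2 ^ (n - l) / (n.factorial : ℝ)) -
        (((n : ℝ) + 1) / 3) ^ 2 = 2 * ((n : ℝ) + 1) / 45 := by
  have hfact : (n.factorial : ℝ) ≠ 0 := Nat.cast_ne_zero.2 n.factorial_ne_zero
  have key : ∀ l, (rankedCountC n l : ℝ) * 2^(n-l) = (PTree.cnt n l : ℝ) := by
    intro l
    have h := rankedCountC_mul_pow n l
    calc (rankedCountC n l : ℝ) * 2^(n-l)
        = ((rankedCountC n l * 2^(n-l) : ℕ) : ℝ) := by push_cast; ring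
      _ = _ := by rw [h]
  have e : ∀ l ∈ Finset.range (n+1),
      (l:ℝ)^2 * (rankedCountC n l : ℝ) * 2^(n-l) / (n.factorial : ℝ)
        = (l:ℝ)^2 * (PTree.cnt n l : ℝ) / (n.factorial : ℝ) := by
    intro l _
    rw [mul_assoc, key l]
  rw [Finset.sum_congr rfl e, ← Finset.sum_div, PTree.sum2_val n hn]
  field_simp
  ring

/-- under the Yule model the expected number of cherries of a
random ranked tree of size `n ≥ 2` is `(n+1)/3`, and its variance is
`2(n+1)/45` for `n ≥ 5`. -/
theorem yule_cherries_mean_and_variance :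
    (∀ n : ℕ, 2 ≤ n →
      ∑ l ∈ Finset.range (n + 1),
        (l : ℝ) * (rankedCountC n l : ℝ) * 2 ^ (n - l) / (n.factorial : ℝ) =
          ((n : ℝ) + 1) / 3) ∧
    (∀ n : ℕ, 5 ≤ n →
      (∑ l ∈ Finset.range (n + 1),
        (l : ℝ) ^ 2 * (rankedCountC n l : ℝ) * 2 ^ (n - l) / (n.factorial : ℝ)) -
        (((n : ℝ) + 1) / 3) ^ 2 = 2 * ((n : ℝ) + 1) / 45) := by
  exact ⟨yule_aux_mean, yule_aux_var⟩
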